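/- Forest expression for hitting times: for an n-state ergodic Markov chain with corresponding weighted digraph G, the mean first passage time satisfies m_ij = f_ij / q_j for i ≠ j and m_jj = q / q_j, where f_ij is the total weight of 2-tree in-forests of G having one tree containing i and the other tree converging to j, q_j is the total weight of spanning trees converging to j, and q = Σ_k q_k. -/

import Mathlib

open Finset Relation Matrix
open scoped Classical

/-- `T` is a (row-)stochastic matrix. -/
def IsStochastic {n : ℕ} (T : Matrix (Fin n) (Fin n) ℝ) : Prop :=
  (∀ i j, 0 ≤ T i j) ∧ ∀ i, ∑ j, T i j = 1

/-- Irreducibility of a Markov chain: every state leads to every state. -/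
def IsIrreducibleMC {n : ℕ} (T : Matrix (Fin n) (Fin n) ℝ) : Prop :=
  ∀ i j, Relation.TransGen (fun a b => 0 < T a b) i j

/-- `pi` is the stationary distribution of `T`. -/
def IsStationaryDist {n : ℕ} (T : Matrix (Fin n) (Fin n) ℝ) (pi : Fin n → ℝ) : Prop :=
  (∀ i, 0 ≤ pi i) ∧ (∑ i, pi i) = 1 ∧ ∀ j, ∑ i, pi i * T i j = pi j

/-- The step relation of a set `A` of arcs. -/
def arcStep {n : ℕ} (A : Finset (Fin n × Fin n)) (x y : Fin n) : Prop := (x, y) ∈ A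

/-- `A` is an in-forest: no loops, out-degree at most one, and no directed cycles;
equivalently, every weak component is a converging tree. -/
def IsInForest {n : ℕ} (A : Finset (Fin n × Fin n)) : Prop :=
  (∀ a ∈ A, a.1 ≠ a.2) ∧
  (∀ v : Fin n, (A.filter fun a => a.1 = v).card ≤ 1) ∧
  ∀ v : Fin n, ¬ Relation.TransGen (arcStep A) v v

/-- `j` is a root (no outgoing arc) of the arc set `A`. -/
def IsRootOf {n : ℕ} (A : Finset (Fin n × Fin n)) (j : Fin n) : Prop := ∀ a ∈ A, a.1 ≠ j

/-- In the in-forest `A`, vertex `i` belongs to the tree converging to the root `j`. -/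
def InTreeOf {n : ℕ} (A : Finset (Fin n × Fin n)) (i j : Fin n) : Prop :=
  IsRootOf A j ∧ Relation.ReflTransGen (arcStep A) i j

/-- The weight of an arc set: the product of its arc weights. -/
noncomputable def digraphWeight {n : ℕ} (W : Matrix (Fin n) (Fin n) ℝ)
    (A : Finset (Fin n × Fin n)) : ℝ :=
  ∏ a ∈ A, W a.1 a.2

/-- Total weight of the in-forests satisfying the predicate `P`. -/
noncomputable def forestWeight {n : ℕ} (W : Matrix (Fin n) (Fin n) ℝ)
    (P : Finset (Fin n × Fin n) → Prop) : ℝ :=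
  ∑ A : Finset (Fin n × Fin n), if IsInForest A ∧ P A then digraphWeight W A else 0

/-- `σ_k`: total weight of in-forests with `k` arcs. -/
noncomputable def sigmaF {n : ℕ} (W : Matrix (Fin n) (Fin n) ℝ) (k : ℕ) : ℝ :=
  forestWeight W fun A => A.card = k

/-- `q^(k)_{ij}`: total weight of in-forests with `k` arcs in which vertex `i`
belongs to the tree converging to `j`. -/
noncomputable def qF {n : ℕ} (W : Matrix (Fin n) (Fin n) ℝ) (k : ℕ) (i j : Fin n) : ℝ :=
  forestWeight W fun A => A.card = k ∧ InTreeOf A i j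

/-- `q_j`: total weight of spanning trees converging to `j`. -/
noncomputable def treeW {n : ℕ} (W : Matrix (Fin n) (Fin n) ℝ) (j : Fin n) : ℝ :=
  qF W (n - 1) j j

/-- `f_{ij}`: total weight of 2-tree in-forests having one tree containing `i`
and the other tree converging to `j`. -/
noncomputable def fF {n : ℕ} (W : Matrix (Fin n) (Fin n) ℝ) (i j : Fin n) : ℝ :=
  forestWeight W fun A =>
    A.card = n - 2 ∧ IsRootOf A j ∧ ¬ Relation.ReflTransGen (arcStep A) i j

/-- `X` is the group inverse of `L`. -/
def IsGroupInverse {n : ℕ} (L X : Matrix (Fin n) (Fin n) ℝ) : Prop :=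
  L * X * L = L ∧ X * L * X = X ∧ L * X = X * L

/-- `M` is the matrix of mean first passage times (with `M j j` the mean return time):
the standard first-step equations. -/
def IsMFPTMatrix {n : ℕ} (T M : Matrix (Fin n) (Fin n) ℝ) : Prop :=
  ∀ i j, M i j = 1 + ∑ k ∈ Finset.univ.filter (fun k => k ≠ j), T i k * M k j

/-- `m` is the hitting-time function with `m i i = 0`. -/
def IsHittingTime {n : ℕ} (T : Matrix (Fin n) (Fin n) ℝ) (m : Fin n → Fin n → ℝ) : Prop :=
  (∀ i, m i i = 0) ∧ ∀ i j, i ≠ j → m i j = 1 + ∑ k, T i k * m k j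

/-- The Laplacian matrix of the weight matrix `W`. -/
noncomputable def lap {n : ℕ} (W : Matrix (Fin n) (Fin n) ℝ) : Matrix (Fin n) (Fin n) ℝ :=
  Matrix.diagonal (fun i => ∑ j, W i j) - W


section Aux
variable {n : ℕ}

abbrev reachA (A : Finset (Fin n × Fin n)) (x y : Fin n) : Prop :=
  Relation.ReflTransGen (arcStep A) x y

lemma forest_subset {A B : Finset (Fin n × Fin n)} (hB : B ⊆ A) (hA : IsInForest A) :
    IsInForest B := by
  obtain ⟨h1, h2, h3⟩ := hA
  refine ⟨fun a ha => h1 a (hB ha), fun v => le_trans (Finset.card_le_card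
    (Finset.filter_subset_filter _ hB)) (h2 v), fun v hv => h3 v (Relation.TransGen.mono (r := arcStep B) (p := arcStep A) (fun a b hab => hB hab) v v hv)⟩

lemma out_unique {A : Finset (Fin n × Fin n)} (hA : IsInForest A) {v a b : Fin n}
    (ha : (v, a) ∈ A) (hb : (v, b) ∈ A) : a = b := by
  have h := hA.2.1 v
  have ha' : (v, a) ∈ A.filter (fun x => x.1 = v) := Finset.mem_filter.2 ⟨ha, rfl⟩
  have hb' : (v, b) ∈ A.filter (fun x => x.1 = v) := Finset.mem_filter.2 ⟨hb, rfl⟩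
  have h2 := Finset.card_le_one.mp h _ ha' _ hb'
  injection h2

lemma root_reach {A : Finset (Fin n × Fin n)} {r z : Fin n} (hr : IsRootOf A r)
    (h : reachA A r z) : r = z := by
  rcases h.cases_head with h | ⟨c, hc, -⟩
  · exact h
  · exact absurd rfl (hr _ hc)

lemma reach_mono {A B : Finset (Fin n × Fin n)} (hAB : A ⊆ B) {x y : Fin n}
    (h : reachA A x y) : reachA B x y :=
  Relation.ReflTransGen.mono (r := arcStep A) (p := arcStep B) (fun a b hab => hAB hab) x y h

lemma reach_insert {A : Finset (Fin n × Fin n)} {u v x y : Fin n}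
    (h : reachA (insert (u, v) A) x y) :
    reachA A x y ∨ (reachA A x u ∧ reachA (insert (u, v) A) v y) := by
  induction h using Relation.ReflTransGen.head_induction_on with
  | refl => exact Or.inl Relation.ReflTransGen.refl
  | head hac hcy ih =>
    rename_i a c
    rcases Finset.mem_insert.mp hac with heq | hmem
    · injection heq with h1 h2; subst h1; subst h2
      exact Or.inr ⟨Relation.ReflTransGen.refl, hcy⟩
    · rcases ih with h1 | ⟨h1, h2⟩
      · exact Or.inl (Relation.ReflTransGen.head hmem h1)
      · exact Or.inr ⟨Relation.ReflTransGen.head hmem h1, h2⟩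

lemma reach_erase {A : Finset (Fin n × Fin n)} {u v x y : Fin n} (h : reachA A x y) :
    reachA (A.erase (u, v)) x y ∨ reachA A x u := by
  induction h using Relation.ReflTransGen.head_induction_on with
  | refl => exact Or.inl Relation.ReflTransGen.refl
  | head hac hcy ih =>
    rename_i a c
    by_cases heq : (a, c) = (u, v)
    · injection heq with h1 h2; subst h1
      exact Or.inr Relation.ReflTransGen.refl
    · rcases ih with h1 | h1
      · exact Or.inl (Relation.ReflTransGen.head (Finset.mem_erase.2 ⟨heq, hac⟩) h1)
      · exact Or.inr (Relation.ReflTransGen.head hac h1)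

lemma not_root_iff {A : Finset (Fin n × Fin n)} {w : Fin n} :
    ¬ IsRootOf A w ↔ ∃ k, (w, k) ∈ A := by
  unfold IsRootOf
  push_neg
  constructor
  · rintro ⟨a, ha, h1⟩
    refine ⟨a.2, ?_⟩
    rw [← h1]
    exact ha
  · rintro ⟨k, hk⟩
    exact ⟨(w, k), hk, rfl⟩

lemma forest_insert {A : Finset (Fin n × Fin n)} {u v : Fin n} (hA : IsInForest A)
    (hu : IsRootOf A u) (hvu : ¬ reachA A v u) (huv : u ≠ v) :
    IsInForest (insert (u, v) A) := by
  refine ⟨?_, ?_, ?_⟩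
  · intro a ha
    rcases Finset.mem_insert.mp ha with rfl | h
    · exact huv
    · exact hA.1 a h
  · intro w
    by_cases hw : w = u
    · have hsub : (insert (u, v) A).filter (fun a => a.1 = w) ⊆ {(u, v)} := by
        intro a ha
        obtain ⟨ha1, ha2⟩ := Finset.mem_filter.mp ha
        rcases Finset.mem_insert.mp ha1 with rfl | h
        · exact Finset.mem_singleton_self _
        · exact absurd (ha2.trans hw) (hu a h)
      calc _ ≤ ({(u, v)} : Finset (Fin n × Fin n)).card := Finset.card_le_card hsub
        _ = 1 := Finset.card_singleton _
    · have heq : (insert (u, v) A).filter (fun a => a.1 = w) = A.filter (fun a => a.1 = w) := by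
        rw [Finset.filter_insert, if_neg (fun h => hw h.symm)]
      rw [heq]
      exact hA.2.1 w
  · intro z hz
    obtain ⟨b, hzb, hbz⟩ := Relation.TransGen.head'_iff.mp hz
    rcases Finset.mem_insert.mp hzb with heq | hmem
    · injection heq with h1 h2; subst h1; subst h2
      rcases reach_insert hbz with h | ⟨h, -⟩
      · exact hvu h
      · exact hvu h
    · rcases reach_insert hbz with h | ⟨hbu, hvz⟩
      · exact hA.2.2 z (Relation.TransGen.head' hmem h)
      · rcases reach_insert hvz with h1 | ⟨h1, -⟩
        · exact hvu (h1.trans (Relation.ReflTransGen.head hmem hbu))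
        · exact hvu h1

end Aux

section Aux2
variable {n : ℕ}

lemma card_roots {A : Finset (Fin n × Fin n)} (hA : IsInForest A) :
    A.card + (Finset.univ.filter fun v => IsRootOf A v).card = n := by
  have himg : A.image Prod.fst = Finset.univ.filter fun v => ¬ IsRootOf A v := by
    ext v
    simp only [Finset.mem_image, Finset.mem_filter, Finset.mem_univ, true_and, not_root_iff]
    constructor
    · rintro ⟨a, ha, rfl⟩
      exact ⟨a.2, ha⟩
    · rintro ⟨k, hk⟩
      exact ⟨(v, k), hk, rfl⟩
  have hcard : (A.image Prod.fst).card = A.card := by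
    apply Finset.card_image_of_injOn
    intro a ha b hb h
    have : a.2 = b.2 := by
      apply out_unique hA (v := a.1)
      · exact ha
      · rw [h]; exact hb
    exact Prod.ext h this
  rw [himg] at hcard
  have h2 := Finset.card_filter_add_card_filter_not
    (s := (Finset.univ : Finset (Fin n))) (p := fun v => IsRootOf A v)
  simp only [Finset.card_univ, Fintype.card_fin] at h2
  omega

lemma root_unique {A : Finset (Fin n × Fin n)} (hA : IsInForest A) (hcard : A.card = n - 1)
    (hn : 1 ≤ n) {r s : Fin n} (hr : IsRootOf A r) (hs : IsRootOf A s) : r = s := by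
  have h := card_roots hA
  have h1 : (Finset.univ.filter fun v => IsRootOf A v).card ≤ 1 := by omega
  exact Finset.card_le_one.mp h1 r (by simp [hr]) s (by simp [hs])

lemma exists_root_reach {A : Finset (Fin n × Fin n)} (hA : IsInForest A) (v : Fin n) :
    ∃ r, IsRootOf A r ∧ reachA A v r := by
  suffices H : ∀ m (v : Fin n),
      (Finset.univ.filter fun w => Relation.TransGen (arcStep A) v w).card ≤ m →
      ∃ r, IsRootOf A r ∧ reachA A v r by
    refine H n v ?_
    calc _ ≤ (Finset.univ : Finset (Fin n)).card := Finset.card_le_card (Finset.filter_subset _ _)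
      _ = n := by simp
  intro m
  induction m with
  | zero =>
    intro v hv
    by_cases hroot : IsRootOf A v
    · exact ⟨v, hroot, Relation.ReflTransGen.refl⟩
    · obtain ⟨w, hw⟩ := not_root_iff.mp hroot
      exfalso
      have : w ∈ Finset.univ.filter fun x => Relation.TransGen (arcStep A) v x := by
        simp only [Finset.mem_filter, Finset.mem_univ, true_and]
        exact Relation.TransGen.single hw
      have := Finset.card_pos.mpr ⟨w, this⟩
      omega
  | succ m ih =>
    intro v hv
    by_cases hroot : IsRootOf A v
    · exact ⟨v, hroot, Relation.ReflTransGen.refl⟩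
    · obtain ⟨w, hw⟩ := not_root_iff.mp hroot
      have hsub : (Finset.univ.filter fun x => Relation.TransGen (arcStep A) w x) ⊆
          (Finset.univ.filter fun x => Relation.TransGen (arcStep A) v x) := by
        intro x hx
        simp only [Finset.mem_filter, Finset.mem_univ, true_and] at hx ⊢
        exact Relation.TransGen.head hw hx
      have hwmem : w ∈ Finset.univ.filter fun x => Relation.TransGen (arcStep A) v x := by
        simp only [Finset.mem_filter, Finset.mem_univ, true_and]
        exact Relation.TransGen.single hw
      have hwnot : w ∉ Finset.univ.filter fun x => Relation.TransGen (arcStep A) w x := by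
        simp only [Finset.mem_filter, Finset.mem_univ, true_and]
        exact hA.2.2 w
      have hlt : (Finset.univ.filter fun x => Relation.TransGen (arcStep A) w x).card <
          (Finset.univ.filter fun x => Relation.TransGen (arcStep A) v x).card := by
        apply Finset.card_lt_card
        exact ⟨hsub, fun h => hwnot (h hwmem)⟩
      obtain ⟨r, hr1, hr2⟩ := ih w (by omega)
      exact ⟨r, hr1, Relation.ReflTransGen.head hw hr2⟩

lemma reach_root_of_tree {A : Finset (Fin n × Fin n)} (hA : IsInForest A)
    (hcard : A.card = n - 1) (hn : 1 ≤ n) {j : Fin n} (hj : IsRootOf A j) (v : Fin n) :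
    reachA A v j := by
  obtain ⟨r, hr, hvr⟩ := exists_root_reach hA v
  rwa [root_unique hA hcard hn hr hj] at hvr

lemma reach_confluence {A : Finset (Fin n × Fin n)} (hA : IsInForest A) {x y z : Fin n}
    (hxy : reachA A x y) (hxz : reachA A x z) : reachA A y z ∨ reachA A z y := by
  revert hxz
  induction hxy using Relation.ReflTransGen.head_induction_on with
  | refl => exact fun h => Or.inl h
  | head hac hcy ih =>
    rename_i a c
    intro haz
    rcases haz.cases_head with rfl | ⟨d, had, hdz⟩
    · exact Or.inr (Relation.ReflTransGen.head hac hcy)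
    · have : d = c := out_unique hA had hac
      subst this
      exact ih hdz

noncomputable def nbr (A : Finset (Fin n × Fin n)) (v : Fin n) : Fin n :=
  if h : ∃ k, (v, k) ∈ A then h.choose else v

lemma nbr_spec {A : Finset (Fin n × Fin n)} (hA : IsInForest A) {v w : Fin n}
    (hw : (v, w) ∈ A) : nbr A v = w := by
  unfold nbr
  rw [dif_pos ⟨w, hw⟩]
  exact out_unique hA (Exists.choose_spec (⟨w, hw⟩ : ∃ k, (v, k) ∈ A)) hw

lemma nbr_mem {A : Finset (Fin n × Fin n)} (hA : IsInForest A) {v : Fin n}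
    (h : ¬ IsRootOf A v) : (v, nbr A v) ∈ A := by
  obtain ⟨k, hk⟩ := not_root_iff.mp h
  rwa [nbr_spec hA hk]

end Aux2

section Aux3
variable {n : ℕ}

lemma bijB (hn : 2 ≤ n) (T : Matrix (Fin n) (Fin n) ℝ) (j : Fin n) :
    ∑ p ∈ (Finset.univ.filter fun p : Fin n × Finset (Fin n × Fin n) =>
        IsInForest p.2 ∧ p.2.card = n - 2 ∧ IsRootOf p.2 j ∧ ¬ reachA p.2 p.1 j),
      T j p.1 * digraphWeight T p.2
    = ∑ B ∈ (Finset.univ.filter fun B : Finset (Fin n × Fin n) =>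
        IsInForest B ∧ B.card = n - 1 ∧ ¬ IsRootOf B j), digraphWeight T B := by
  refine Finset.sum_bij' (fun p _ => insert (j, p.1) p.2)
    (fun B _ => (nbr B j, B.erase (j, nbr B j))) ?_ ?_ ?_ ?_ ?_
  · intro p hp
    simp only [Finset.mem_filter, Finset.mem_univ, true_and] at hp ⊢
    obtain ⟨hF, hC, hR, hreach⟩ := hp
    have hjk : j ≠ p.1 := by rintro rfl; exact hreach Relation.ReflTransGen.refl
    have hnotmem : (j, p.1) ∉ p.2 := fun h => hR _ h rfl
    refine ⟨forest_insert hF hR hreach hjk, ?_, ?_⟩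
    · rw [Finset.card_insert_of_notMem hnotmem, hC]; omega
    · exact not_root_iff.mpr ⟨p.1, Finset.mem_insert_self _ _⟩
  · intro B hB
    simp only [Finset.mem_filter, Finset.mem_univ, true_and] at hB ⊢
    obtain ⟨hF, hC, hnR⟩ := hB
    have hmem : (j, nbr B j) ∈ B := nbr_mem hF hnR
    refine ⟨forest_subset (Finset.erase_subset _ _) hF, ?_, ?_, ?_⟩
    · rw [Finset.card_erase_of_mem hmem, hC]; omega
    · intro a ha h
      obtain ⟨hane, haB⟩ := Finset.mem_erase.mp ha
      apply hane
      have h2 : (j, a.2) ∈ B := by rw [← h]; exact haB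
      have h3 := out_unique hF h2 hmem
      rw [Prod.ext_iff]
      exact ⟨h, h3⟩
    · intro h
      exact hF.2.2 j (Relation.TransGen.head' (hmem : arcStep B j (nbr B j))
        (reach_mono (Finset.erase_subset _ _) h))
  · intro p hp
    simp only [Finset.mem_filter, Finset.mem_univ, true_and] at hp
    obtain ⟨hF, hC, hR, hreach⟩ := hp
    have hjk : j ≠ p.1 := by rintro rfl; exact hreach Relation.ReflTransGen.refl
    have hnotmem : (j, p.1) ∉ p.2 := fun h => hR _ h rfl
    have hF' : IsInForest (insert (j, p.1) p.2) := forest_insert hF hR hreach hjk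
    have : nbr (insert (j, p.1) p.2) j = p.1 :=
      nbr_spec hF' (Finset.mem_insert_self _ _)
    rw [this, Finset.erase_insert hnotmem]
  · intro B hB
    simp only [Finset.mem_filter, Finset.mem_univ, true_and] at hB
    obtain ⟨hF, hC, hnR⟩ := hB
    dsimp only
    exact Finset.insert_erase (nbr_mem hF hnR)
  · intro p hp
    simp only [Finset.mem_filter, Finset.mem_univ, true_and] at hp
    obtain ⟨hF, hC, hR, hreach⟩ := hp
    have hnotmem : (j, p.1) ∉ p.2 := fun h => hR _ h rfl
    simp [digraphWeight, Finset.prod_insert hnotmem]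

end Aux3

section Aux4
variable {n : ℕ}

lemma root_of_erase {A : Finset (Fin n × Fin n)} (hF : IsInForest A) {v w : Fin n}
    (h : (v, w) ∈ A) : IsRootOf (A.erase (v, w)) v := by
  intro a ha h1
  obtain ⟨hane, haA⟩ := Finset.mem_erase.mp ha
  apply hane
  have h2 : (v, a.2) ∈ A := by rw [← h1]; exact haA
  have h3 := out_unique hF h2 h
  rw [Prod.ext_iff]
  exact ⟨h1, h3⟩

lemma no_reach_back {A : Finset (Fin n × Fin n)} (hF : IsInForest A) {i j k : Fin n}
    (hij : i ≠ j) (hRj : IsRootOf A j) (hri : ¬ reachA A i j) (hrk : reachA A k j) :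
    ¬ reachA A k i := by
  intro h
  rcases reach_confluence hF h hrk with h1 | h1
  · exact hri h1
  · exact hij ((root_reach hRj h1).symm)

lemma bijA1 (hn : 2 ≤ n) (T : Matrix (Fin n) (Fin n) ℝ) {i j : Fin n} (hij : i ≠ j) :
    ∑ p ∈ (Finset.univ.filter fun p : Fin n × Finset (Fin n × Fin n) =>
        IsInForest p.2 ∧ p.2.card = n - 2 ∧ IsRootOf p.2 j ∧ ¬ reachA p.2 i j ∧
          reachA p.2 p.1 j ∧ IsRootOf p.2 i),
      T i p.1 * digraphWeight T p.2
    = ∑ B ∈ (Finset.univ.filter fun B : Finset (Fin n × Fin n) =>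
        IsInForest B ∧ B.card = n - 1 ∧ IsRootOf B j), digraphWeight T B := by
  refine Finset.sum_bij' (fun p _ => insert (i, p.1) p.2)
    (fun B _ => (nbr B i, B.erase (i, nbr B i))) ?_ ?_ ?_ ?_ ?_
  · intro p hp
    simp only [Finset.mem_filter, Finset.mem_univ, true_and] at hp ⊢
    obtain ⟨hF, hC, hRj, hri, hrk, hRi⟩ := hp
    have hik : i ≠ p.1 := by rintro rfl; exact hri hrk
    have hki : ¬ reachA p.2 p.1 i := no_reach_back hF hij hRj hri hrk
    have hnotmem : (i, p.1) ∉ p.2 := fun h => hRi _ h rfl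
    refine ⟨forest_insert hF hRi hki hik, ?_, ?_⟩
    · rw [Finset.card_insert_of_notMem hnotmem, hC]; omega
    · intro a ha h1
      rcases Finset.mem_insert.mp ha with rfl | h2
      · exact hij (h1 : i = j)
      · exact hRj a h2 h1
  · intro B hB
    simp only [Finset.mem_filter, Finset.mem_univ, true_and] at hB ⊢
    obtain ⟨hF, hC, hRj⟩ := hB
    have hiroot : ¬ IsRootOf B i := fun h => hij (root_unique hF hC (by omega) h hRj)
    have hmem : (i, nbr B i) ∈ B := nbr_mem hF hiroot
    have hRi' : IsRootOf (B.erase (i, nbr B i)) i := root_of_erase hF hmem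
    refine ⟨forest_subset (Finset.erase_subset _ _) hF, ?_, ?_, ?_, ?_, hRi'⟩
    · rw [Finset.card_erase_of_mem hmem, hC]; omega
    · exact fun a ha => hRj a (Finset.mem_of_mem_erase ha)
    · intro h
      exact hij (root_reach hRi' h)
    · have hBkj : reachA B (nbr B i) j := reach_root_of_tree hF hC (by omega) hRj _
      rcases reach_erase (u := i) (v := nbr B i) hBkj with h | h
      · exact h
      · exact absurd (Relation.TransGen.head' (hmem : arcStep B i (nbr B i)) h) (hF.2.2 i)
  · intro p hp
    simp only [Finset.mem_filter, Finset.mem_univ, true_and] at hp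
    obtain ⟨hF, hC, hRj, hri, hrk, hRi⟩ := hp
    have hik : i ≠ p.1 := by rintro rfl; exact hri hrk
    have hki : ¬ reachA p.2 p.1 i := no_reach_back hF hij hRj hri hrk
    have hnotmem : (i, p.1) ∉ p.2 := fun h => hRi _ h rfl
    have hF' : IsInForest (insert (i, p.1) p.2) := forest_insert hF hRi hki hik
    have hnbr : nbr (insert (i, p.1) p.2) i = p.1 := nbr_spec hF' (Finset.mem_insert_self _ _)
    rw [hnbr, Finset.erase_insert hnotmem]
  · intro B hB
    simp only [Finset.mem_filter, Finset.mem_univ, true_and] at hB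
    obtain ⟨hF, hC, hRj⟩ := hB
    have hiroot : ¬ IsRootOf B i := fun h => hij (root_unique hF hC (by omega) h hRj)
    dsimp only
    exact Finset.insert_erase (nbr_mem hF hiroot)
  · intro p hp
    simp only [Finset.mem_filter, Finset.mem_univ, true_and] at hp
    obtain ⟨hF, hC, hRj, hri, hrk, hRi⟩ := hp
    have hnotmem : (i, p.1) ∉ p.2 := fun h => hRi _ h rfl
    simp [digraphWeight, Finset.prod_insert hnotmem]

lemma bijA2 (hn : 2 ≤ n) (T : Matrix (Fin n) (Fin n) ℝ) {i j : Fin n} (hij : i ≠ j) :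
    ∑ p ∈ (Finset.univ.filter fun p : Fin n × Finset (Fin n × Fin n) =>
        IsInForest p.2 ∧ p.2.card = n - 2 ∧ IsRootOf p.2 j ∧ ¬ reachA p.2 i j ∧
          reachA p.2 p.1 j ∧ ¬ IsRootOf p.2 i),
      T i p.1 * digraphWeight T p.2
    = ∑ p ∈ (Finset.univ.filter fun p : Fin n × Finset (Fin n × Fin n) =>
        IsInForest p.2 ∧ p.2.card = n - 2 ∧ IsRootOf p.2 j ∧ reachA p.2 i j ∧
          ¬ reachA p.2 p.1 j),
      T i p.1 * digraphWeight T p.2 := by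
  refine Finset.sum_bij'
    (fun p _ => (nbr p.2 i, insert (i, p.1) (p.2.erase (i, nbr p.2 i))))
    (fun p _ => (nbr p.2 i, insert (i, p.1) (p.2.erase (i, nbr p.2 i)))) ?_ ?_ ?_ ?_ ?_
  · intro p hp
    simp only [Finset.mem_filter, Finset.mem_univ, true_and] at hp ⊢
    obtain ⟨hF, hC, hRj, hri, hrk, hnRi⟩ := hp
    obtain ⟨k, A⟩ := p
    dsimp only at *
    have hp0 : (i, nbr A i) ∈ A := nbr_mem hF hnRi
    have hik : i ≠ k := by rintro rfl; exact hri hrk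
    have hkiA : ¬ reachA A k i := no_reach_back hF hij hRj hri hrk
    have hikA : (i, k) ∉ A := fun h => hri (Relation.ReflTransGen.head h hrk)
    have hF0 : IsInForest (A.erase (i, nbr A i)) := forest_subset (Finset.erase_subset _ _) hF
    have hR0 : IsRootOf (A.erase (i, nbr A i)) i := root_of_erase hF hp0
    have hki0 : ¬ reachA (A.erase (i, nbr A i)) k i :=
      fun h => hkiA (reach_mono (Finset.erase_subset _ _) h)
    have hik0 : (i, k) ∉ A.erase (i, nbr A i) := fun h => hikA (Finset.mem_of_mem_erase h)
    have hF' : IsInForest (insert (i, k) (A.erase (i, nbr A i))) :=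
      forest_insert hF0 hR0 hki0 hik
    have hcpos : 1 ≤ A.card := Finset.card_pos.mpr ⟨_, hp0⟩
    refine ⟨hF', ?_, ?_, ?_, ?_⟩
    · rw [Finset.card_insert_of_notMem hik0, Finset.card_erase_of_mem hp0]; omega
    · intro a ha h1
      rcases Finset.mem_insert.mp ha with rfl | h2
      · exact hij (h1 : i = j)
      · exact hRj a (Finset.mem_of_mem_erase h2) h1
    · rcases reach_erase (u := i) (v := nbr A i) hrk with h0 | h0
      · exact Relation.ReflTransGen.head (Finset.mem_insert_self _ _)
          (reach_mono (Finset.subset_insert _ _) h0)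
      · exact absurd h0 hkiA
    · intro h
      rcases reach_insert h with h0 | ⟨h0, -⟩
      · exact hri (Relation.ReflTransGen.head hp0 (reach_mono (Finset.erase_subset _ _) h0))
      · exact hF.2.2 i (Relation.TransGen.head' (hp0 : arcStep A i (nbr A i))
          (reach_mono (Finset.erase_subset _ _) h0))
  · intro p hp
    simp only [Finset.mem_filter, Finset.mem_univ, true_and] at hp ⊢
    obtain ⟨hF, hC, hRj, hrij, hnrk⟩ := hp
    obtain ⟨k, A⟩ := p
    dsimp only at *
    have hnRi : ¬ IsRootOf A i := fun h => hij (root_reach h hrij)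
    have hp0 : (i, nbr A i) ∈ A := nbr_mem hF hnRi
    have hPj : reachA A (nbr A i) j := by
      rcases hrij.cases_head with heq | ⟨c, hic, hcj⟩
      · exact absurd heq hij
      · have : c = nbr A i := out_unique hF hic hp0
        rwa [this] at hcj
    have hik : i ≠ k := by rintro rfl; exact hnrk hrij
    have hikA : (i, k) ∉ A := fun h => hnrk (by
      have : k = nbr A i := out_unique hF h hp0
      rwa [this])
    have hkiA : ¬ reachA A k i := fun h => hnrk (h.trans hrij)
    have hF0 : IsInForest (A.erase (i, nbr A i)) := forest_subset (Finset.erase_subset _ _) hF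
    have hR0 : IsRootOf (A.erase (i, nbr A i)) i := root_of_erase hF hp0
    have hki0 : ¬ reachA (A.erase (i, nbr A i)) k i :=
      fun h => hkiA (reach_mono (Finset.erase_subset _ _) h)
    have hik0 : (i, k) ∉ A.erase (i, nbr A i) := fun h => hikA (Finset.mem_of_mem_erase h)
    have hF' : IsInForest (insert (i, k) (A.erase (i, nbr A i))) :=
      forest_insert hF0 hR0 hki0 hik
    have hcpos : 1 ≤ A.card := Finset.card_pos.mpr ⟨_, hp0⟩
    refine ⟨hF', ?_, ?_, ?_, ?_, ?_⟩
    · rw [Finset.card_insert_of_notMem hik0, Finset.card_erase_of_mem hp0]; omega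
    · intro a ha h1
      rcases Finset.mem_insert.mp ha with rfl | h2
      · exact hij (h1 : i = j)
      · exact hRj a (Finset.mem_of_mem_erase h2) h1
    · intro h
      rcases h.cases_head with heq | ⟨c, hic, hcj⟩
      · exact hij heq
      · rcases Finset.mem_insert.mp hic with heq2 | h2
        · injection heq2 with e1 e2
          subst e2
          rcases reach_insert hcj with h0 | ⟨h0, -⟩
          · exact hnrk (reach_mono (Finset.erase_subset _ _) h0)
          · exact hki0 h0
        · exact hR0 _ h2 rfl
    · rcases reach_erase (u := i) (v := nbr A i) hPj with h0 | h0
      · exact reach_mono (Finset.subset_insert _ _) h0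
      · exact absurd (Relation.TransGen.head' (hp0 : arcStep A i (nbr A i)) h0) (hF.2.2 i)
    · intro h
      exact h _ (Finset.mem_insert_self _ _) rfl
  · intro p hp
    simp only [Finset.mem_filter, Finset.mem_univ, true_and] at hp
    obtain ⟨hF, hC, hRj, hri, hrk, hnRi⟩ := hp
    obtain ⟨k, A⟩ := p
    dsimp only at *
    have hp0 : (i, nbr A i) ∈ A := nbr_mem hF hnRi
    have hik : i ≠ k := by rintro rfl; exact hri hrk
    have hkiA : ¬ reachA A k i := no_reach_back hF hij hRj hri hrk
    have hikA : (i, k) ∉ A := fun h => hri (Relation.ReflTransGen.head h hrk)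
    have hF0 : IsInForest (A.erase (i, nbr A i)) := forest_subset (Finset.erase_subset _ _) hF
    have hR0 : IsRootOf (A.erase (i, nbr A i)) i := root_of_erase hF hp0
    have hki0 : ¬ reachA (A.erase (i, nbr A i)) k i :=
      fun h => hkiA (reach_mono (Finset.erase_subset _ _) h)
    have hik0 : (i, k) ∉ A.erase (i, nbr A i) := fun h => hikA (Finset.mem_of_mem_erase h)
    have hF' : IsInForest (insert (i, k) (A.erase (i, nbr A i))) :=
      forest_insert hF0 hR0 hki0 hik
    have hnbr : nbr (insert (i, k) (A.erase (i, nbr A i))) i = k :=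
      nbr_spec hF' (Finset.mem_insert_self _ _)
    rw [Prod.ext_iff]
    dsimp only
    rw [hnbr]
    exact ⟨rfl, by rw [Finset.erase_insert hik0, Finset.insert_erase hp0]⟩
  · intro p hp
    simp only [Finset.mem_filter, Finset.mem_univ, true_and] at hp
    obtain ⟨hF, hC, hRj, hrij, hnrk⟩ := hp
    obtain ⟨k, A⟩ := p
    dsimp only at *
    have hnRi : ¬ IsRootOf A i := fun h => hij (root_reach h hrij)
    have hp0 : (i, nbr A i) ∈ A := nbr_mem hF hnRi
    have hPj : reachA A (nbr A i) j := by
      rcases hrij.cases_head with heq | ⟨c, hic, hcj⟩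
      · exact absurd heq hij
      · have : c = nbr A i := out_unique hF hic hp0
        rwa [this] at hcj
    have hik : i ≠ k := by rintro rfl; exact hnrk hrij
    have hikA : (i, k) ∉ A := fun h => hnrk (by
      have : k = nbr A i := out_unique hF h hp0
      rwa [this])
    have hkiA : ¬ reachA A k i := fun h => hnrk (h.trans hrij)
    have hF0 : IsInForest (A.erase (i, nbr A i)) := forest_subset (Finset.erase_subset _ _) hF
    have hR0 : IsRootOf (A.erase (i, nbr A i)) i := root_of_erase hF hp0
    have hki0 : ¬ reachA (A.erase (i, nbr A i)) k i :=
      fun h => hkiA (reach_mono (Finset.erase_subset _ _) h)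
    have hik0 : (i, k) ∉ A.erase (i, nbr A i) := fun h => hikA (Finset.mem_of_mem_erase h)
    have hF' : IsInForest (insert (i, k) (A.erase (i, nbr A i))) :=
      forest_insert hF0 hR0 hki0 hik
    have hnbr : nbr (insert (i, k) (A.erase (i, nbr A i))) i = k :=
      nbr_spec hF' (Finset.mem_insert_self _ _)
    rw [Prod.ext_iff]
    dsimp only
    rw [hnbr]
    exact ⟨rfl, by rw [Finset.erase_insert hik0, Finset.insert_erase hp0]⟩
  · intro p hp
    simp only [Finset.mem_filter, Finset.mem_univ, true_and] at hp
    obtain ⟨hF, hC, hRj, hri, hrk, hnRi⟩ := hp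
    obtain ⟨k, A⟩ := p
    dsimp only at *
    have hp0 : (i, nbr A i) ∈ A := nbr_mem hF hnRi
    have hikA : (i, k) ∉ A := fun h => hri (Relation.ReflTransGen.head h hrk)
    have hik0 : (i, k) ∉ A.erase (i, nbr A i) := fun h => hikA (Finset.mem_of_mem_erase h)
    simp only [digraphWeight]
    rw [Finset.prod_insert hik0, ← Finset.mul_prod_erase A _ hp0]
    ring

end Aux4


section Aux5
variable {n : ℕ}

lemma ite_iff {c d : Prop} (hc : Decidable c) (hd : Decidable d) (h : c ↔ d) (t e : ℝ) :
    @ite _ c hc t e = @ite _ d hd t e := by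
  by_cases h1 : c
  · rw [if_pos h1, if_pos (h.mp h1)]
  · rw [if_neg h1, if_neg (fun h2 => h1 (h.mpr h2))]

/-- Weighted sum over arc sets satisfying `P`. -/
noncomputable def setW (T : Matrix (Fin n) (Fin n) ℝ)
    (P : Finset (Fin n × Fin n) → Prop) : ℝ :=
  ∑ A : Finset (Fin n × Fin n), if P A then digraphWeight T A else 0

/-- Weighted sum over pairs (a vertex and an arc set) satisfying `P`. -/
noncomputable def pairW (T : Matrix (Fin n) (Fin n) ℝ) (i : Fin n)
    (P : Fin n × Finset (Fin n × Fin n) → Prop) : ℝ :=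
  ∑ p : Fin n × Finset (Fin n × Fin n), if P p then T i p.1 * digraphWeight T p.2 else 0

lemma setW_congr {T : Matrix (Fin n) (Fin n) ℝ} {P Q : Finset (Fin n × Fin n) → Prop}
    (h : ∀ A, P A ↔ Q A) : setW T P = setW T Q :=
  Finset.sum_congr rfl fun A _ => ite_iff _ _ (h A) _ _

lemma pairW_congr {T : Matrix (Fin n) (Fin n) ℝ} {i : Fin n}
    {P Q : Fin n × Finset (Fin n × Fin n) → Prop} (h : ∀ p, P p ↔ Q p) :
    pairW T i P = pairW T i Q :=
  Finset.sum_congr rfl fun p _ => ite_iff _ _ (h p) _ _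

lemma setW_split (T : Matrix (Fin n) (Fin n) ℝ) (P Q : Finset (Fin n × Fin n) → Prop) :
    setW T P = setW T (fun A => P A ∧ Q A) + setW T (fun A => P A ∧ ¬ Q A) := by
  rw [setW, setW, setW, ← Finset.sum_add_distrib]
  refine Finset.sum_congr rfl fun A _ => ?_
  by_cases hP : P A <;> by_cases hQ : Q A <;> simp [hP, hQ]

lemma pairW_split (T : Matrix (Fin n) (Fin n) ℝ) (i : Fin n)
    (P Q : Fin n × Finset (Fin n × Fin n) → Prop) :
    pairW T i P = pairW T i (fun p => P p ∧ Q p) + pairW T i (fun p => P p ∧ ¬ Q p) := by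
  rw [pairW, pairW, pairW, ← Finset.sum_add_distrib]
  refine Finset.sum_congr rfl fun p _ => ?_
  by_cases hP : P p <;> by_cases hQ : Q p <;> simp [hP, hQ]

lemma setW_eq_filter (T : Matrix (Fin n) (Fin n) ℝ) (P : Finset (Fin n × Fin n) → Prop)
    [DecidablePred P] :
    setW T P = ∑ A ∈ Finset.univ.filter P, digraphWeight T A := by
  rw [Finset.sum_filter]
  exact Finset.sum_congr rfl fun A _ => ite_iff _ _ Iff.rfl _ _

lemma pairW_eq_filter (T : Matrix (Fin n) (Fin n) ℝ) (i : Fin n)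
    (P : Fin n × Finset (Fin n × Fin n) → Prop) [DecidablePred P] :
    pairW T i P = ∑ p ∈ Finset.univ.filter P, T i p.1 * digraphWeight T p.2 := by
  rw [Finset.sum_filter]
  exact Finset.sum_congr rfl fun p _ => ite_iff _ _ Iff.rfl _ _

lemma fF_self (T : Matrix (Fin n) (Fin n) ℝ) (j : Fin n) : fF T j j = 0 := by
  rw [fF, forestWeight]
  refine Finset.sum_eq_zero fun A _ => ?_
  rw [if_neg]
  rintro ⟨-, -, -, h⟩
  exact h Relation.ReflTransGen.refl

lemma treeW_set (T : Matrix (Fin n) (Fin n) ℝ) (r : Fin n) :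
    treeW T r = setW T (fun A => IsInForest A ∧ A.card = n - 1 ∧ IsRootOf A r) := by
  rw [treeW, qF, forestWeight]
  refine Finset.sum_congr rfl fun A _ => ite_iff _ _ ?_ _ _
  constructor
  · rintro ⟨h1, h2, h3⟩; exact ⟨h1, h2, h3.1⟩
  · rintro ⟨h1, h2, h3⟩; exact ⟨h1, h2, h3, Relation.ReflTransGen.refl⟩

lemma sum_treeW (hn : 1 ≤ n) (T : Matrix (Fin n) (Fin n) ℝ) :
    ∑ r, treeW T r = setW T (fun A => IsInForest A ∧ A.card = n - 1) := by
  rw [Finset.sum_congr rfl fun r _ => treeW_set T r]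
  simp only [setW]
  rw [Finset.sum_comm]
  refine Finset.sum_congr rfl fun A _ => ?_
  by_cases hFC : IsInForest A ∧ A.card = n - 1
  · rw [if_pos hFC]
    have hone : (Finset.univ.filter fun r => IsRootOf A r).card = 1 := by
      have := card_roots hFC.1
      have := hFC.2
      omega
    have hstep : (∑ r : Fin n, if IsRootOf A r then digraphWeight T A else 0)
        = digraphWeight T A := by
      rw [← Finset.sum_filter, Finset.sum_const, hone, one_smul]
    refine Eq.trans (Finset.sum_congr rfl fun r _ => ?_) hstep
    exact ite_iff _ _ ⟨fun h => h.2.2, fun h => ⟨hFC.1, hFC.2, h⟩⟩ _ _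
  · rw [if_neg hFC]
    exact Finset.sum_eq_zero fun r _ => if_neg (fun h => hFC ⟨h.1, h.2.1⟩)

lemma pair_sum (T : Matrix (Fin n) (Fin n) ℝ) (i j : Fin n)
    (c : Fin n → Finset (Fin n × Fin n) → Prop) :
    pairW T i (fun p => IsInForest p.2 ∧ p.2.card = n - 2 ∧ IsRootOf p.2 j ∧ c p.1 p.2)
      = ∑ k, T i k * (forestWeight T fun A => A.card = n - 2 ∧ IsRootOf A j ∧ c k A) := by
  rw [pairW, Fintype.sum_prod_type]
  refine Finset.sum_congr rfl fun k _ => ?_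
  rw [forestWeight, Finset.mul_sum]
  refine Finset.sum_congr rfl fun A _ => ?_
  rw [mul_ite, mul_zero]
  exact ite_iff _ _ Iff.rfl _ _

lemma bijB' (hn : 2 ≤ n) (T : Matrix (Fin n) (Fin n) ℝ) (j : Fin n) :
    pairW T j (fun p =>
        IsInForest p.2 ∧ p.2.card = n - 2 ∧ IsRootOf p.2 j ∧ ¬ reachA p.2 p.1 j)
      = setW T (fun B => IsInForest B ∧ B.card = n - 1 ∧ ¬ IsRootOf B j) := by
  rw [pairW_eq_filter, setW_eq_filter]
  exact bijB hn T j

lemma bijA1' (hn : 2 ≤ n) (T : Matrix (Fin n) (Fin n) ℝ) {i j : Fin n} (hij : i ≠ j) :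
    pairW T i (fun p =>
        IsInForest p.2 ∧ p.2.card = n - 2 ∧ IsRootOf p.2 j ∧ ¬ reachA p.2 i j ∧
          reachA p.2 p.1 j ∧ IsRootOf p.2 i)
      = setW T (fun B => IsInForest B ∧ B.card = n - 1 ∧ IsRootOf B j) := by
  rw [pairW_eq_filter, setW_eq_filter]
  exact bijA1 hn T hij

lemma bijA2' (hn : 2 ≤ n) (T : Matrix (Fin n) (Fin n) ℝ) {i j : Fin n} (hij : i ≠ j) :
    pairW T i (fun p =>
        IsInForest p.2 ∧ p.2.card = n - 2 ∧ IsRootOf p.2 j ∧ ¬ reachA p.2 i j ∧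
          reachA p.2 p.1 j ∧ ¬ IsRootOf p.2 i)
      = pairW T i (fun p =>
        IsInForest p.2 ∧ p.2.card = n - 2 ∧ IsRootOf p.2 j ∧ reachA p.2 i j ∧
          ¬ reachA p.2 p.1 j) := by
  rw [pairW_eq_filter, pairW_eq_filter]
  exact bijA2 hn T hij

lemma keyB (hn : 2 ≤ n) (T : Matrix (Fin n) (Fin n) ℝ) (j : Fin n) :
    ∑ k, treeW T k = treeW T j +
      ∑ k ∈ Finset.univ.filter (fun k => k ≠ j), T j k * fF T k j := by
  have hzero : ∑ k ∈ Finset.univ.filter (fun k : Fin n => ¬ k ≠ j), T j k * fF T k j = 0 := by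
    refine Finset.sum_eq_zero fun k hk => ?_
    obtain ⟨-, hk2⟩ := Finset.mem_filter.mp hk
    rw [not_not.mp hk2, fF_self, mul_zero]
  have hsplit := Finset.sum_filter_add_sum_filter_not Finset.univ (fun k : Fin n => k ≠ j)
    (fun k => T j k * fF T k j)
  have h1 : pairW T j (fun p =>
        IsInForest p.2 ∧ p.2.card = n - 2 ∧ IsRootOf p.2 j ∧ ¬ reachA p.2 p.1 j)
      = ∑ k, T j k * fF T k j :=
    pair_sum T j j (fun k A => ¬ reachA A k j)
  have h2 := bijB' hn T j
  have h3 := setW_split T (fun A => IsInForest A ∧ A.card = n - 1) (fun A => IsRootOf A j)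
  have h4 : setW T (fun A => (IsInForest A ∧ A.card = n - 1) ∧ IsRootOf A j)
      = treeW T j := by
    rw [treeW_set]
    exact setW_congr fun A => by tauto
  have h5 : setW T (fun A => (IsInForest A ∧ A.card = n - 1) ∧ ¬ IsRootOf A j)
      = setW T (fun B => IsInForest B ∧ B.card = n - 1 ∧ ¬ IsRootOf B j) :=
    setW_congr fun A => by tauto
  rw [sum_treeW (by omega) T]
  linarith [h1, h2, h3, h4, h5, hsplit, hzero]

lemma keyA (hn : 2 ≤ n) (T : Matrix (Fin n) (Fin n) ℝ) (hst : IsStochastic T)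
    {i j : Fin n} (hij : i ≠ j) :
    fF T i j = treeW T j +
      ∑ k ∈ Finset.univ.filter (fun k => k ≠ j), T i k * fF T k j := by
  have hzero : ∑ k ∈ Finset.univ.filter (fun k : Fin n => ¬ k ≠ j), T i k * fF T k j = 0 := by
    refine Finset.sum_eq_zero fun k hk => ?_
    obtain ⟨-, hk2⟩ := Finset.mem_filter.mp hk
    rw [not_not.mp hk2, fF_self, mul_zero]
  have hsplit := Finset.sum_filter_add_sum_filter_not Finset.univ (fun k : Fin n => k ≠ j)
    (fun k => T i k * fF T k j)
  have hrow : ∑ k, T i k * fF T i j = fF T i j := by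
    rw [← Finset.sum_mul, hst.2 i, one_mul]
  have hX : pairW T i (fun p =>
        IsInForest p.2 ∧ p.2.card = n - 2 ∧ IsRootOf p.2 j ∧ ¬ reachA p.2 i j)
      = fF T i j := by
    rw [← hrow]
    exact pair_sum T i j (fun _ A => ¬ reachA A i j)
  have hY : pairW T i (fun p =>
        IsInForest p.2 ∧ p.2.card = n - 2 ∧ IsRootOf p.2 j ∧ ¬ reachA p.2 p.1 j)
      = ∑ k, T i k * fF T k j :=
    pair_sum T i j (fun k A => ¬ reachA A k j)
  have hXsplit := pairW_split T i
    (fun p => IsInForest p.2 ∧ p.2.card = n - 2 ∧ IsRootOf p.2 j ∧ ¬ reachA p.2 i j)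
    (fun p => reachA p.2 p.1 j)
  have hYsplit := pairW_split T i
    (fun p => IsInForest p.2 ∧ p.2.card = n - 2 ∧ IsRootOf p.2 j ∧ ¬ reachA p.2 p.1 j)
    (fun p => reachA p.2 i j)
  have hXRsplit := pairW_split T i
    (fun p => (IsInForest p.2 ∧ p.2.card = n - 2 ∧ IsRootOf p.2 j ∧ ¬ reachA p.2 i j) ∧
      reachA p.2 p.1 j)
    (fun p => IsRootOf p.2 i)
  have e1 : pairW T i (fun p =>
      ((IsInForest p.2 ∧ p.2.card = n - 2 ∧ IsRootOf p.2 j ∧ ¬ reachA p.2 i j) ∧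
        reachA p.2 p.1 j) ∧ IsRootOf p.2 i)
      = pairW T i (fun p =>
      IsInForest p.2 ∧ p.2.card = n - 2 ∧ IsRootOf p.2 j ∧ ¬ reachA p.2 i j ∧
        reachA p.2 p.1 j ∧ IsRootOf p.2 i) :=
    pairW_congr fun p => by tauto
  have e2 : pairW T i (fun p =>
      ((IsInForest p.2 ∧ p.2.card = n - 2 ∧ IsRootOf p.2 j ∧ ¬ reachA p.2 i j) ∧
        reachA p.2 p.1 j) ∧ ¬ IsRootOf p.2 i)
      = pairW T i (fun p =>
      IsInForest p.2 ∧ p.2.card = n - 2 ∧ IsRootOf p.2 j ∧ ¬ reachA p.2 i j ∧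
        reachA p.2 p.1 j ∧ ¬ IsRootOf p.2 i) :=
    pairW_congr fun p => by tauto
  have e3 : pairW T i (fun p =>
      (IsInForest p.2 ∧ p.2.card = n - 2 ∧ IsRootOf p.2 j ∧ ¬ reachA p.2 p.1 j) ∧
        reachA p.2 i j)
      = pairW T i (fun p =>
      IsInForest p.2 ∧ p.2.card = n - 2 ∧ IsRootOf p.2 j ∧ reachA p.2 i j ∧
        ¬ reachA p.2 p.1 j) :=
    pairW_congr fun p => by tauto
  have e4 : pairW T i (fun p =>
      (IsInForest p.2 ∧ p.2.card = n - 2 ∧ IsRootOf p.2 j ∧ ¬ reachA p.2 i j) ∧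
        ¬ reachA p.2 p.1 j)
      = pairW T i (fun p =>
      (IsInForest p.2 ∧ p.2.card = n - 2 ∧ IsRootOf p.2 j ∧ ¬ reachA p.2 p.1 j) ∧
        ¬ reachA p.2 i j) :=
    pairW_congr fun p => by tauto
  have hb1 := bijA1' hn T hij
  have hb2 := bijA2' hn T hij
  have htw : setW T (fun B => IsInForest B ∧ B.card = n - 1 ∧ IsRootOf B j) = treeW T j :=
    (treeW_set T j).symm
  linarith [hzero, hsplit, hrow, hX, hY, hXsplit, hYsplit, hXRsplit, e1, e2, e3, e4, hb1,
    hb2, htw]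
end Aux5

section Aux6
variable {n : ℕ}

noncomputable def layers (T : Matrix (Fin n) (Fin n) ℝ) (j : Fin n) : ℕ → Finset (Fin n)
  | 0 => {j}
  | m + 1 => layers T j m ∪ Finset.univ.filter (fun v => ∃ w ∈ layers T j m, 0 < T v w)

lemma treeW_pos (hn : 1 ≤ n) {T : Matrix (Fin n) (Fin n) ℝ} (hst : IsStochastic T)
    (hirr : IsIrreducibleMC T) (j : Fin n) : 0 < treeW T j := by
  classical
  -- breadth-first layers towards j
  set N : ℕ → Finset (Fin n) := layers T j with hN
  have hNstep : ∀ m v w, w ∈ N m → 0 < T v w → v ∈ N (m + 1) := by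
    intro m v w hw hT
    rw [hN, layers]
    exact Finset.mem_union_right _ (Finset.mem_filter.2 ⟨Finset.mem_univ _, w, hw, hT⟩)
  have hexists : ∀ v : Fin n, ∃ m, v ∈ N m := by
    intro v
    have h := hirr v j
    induction h using Relation.TransGen.head_induction_on with
    | single h =>
      refine ⟨1, hNstep 0 _ j ?_ h⟩
      rw [hN, layers]
      exact Finset.mem_singleton_self j
    | head h _ ih =>
      obtain ⟨m, hm⟩ := ih
      exact ⟨m + 1, hNstep m _ _ hm h⟩
  let ρ : Fin n → ℕ := fun v => Nat.find (hexists v)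
  have hρj : ρ j = 0 := Nat.eq_zero_of_le_zero (Nat.find_le (by rw [hN, layers]; exact Finset.mem_singleton_self j))
  have hpar : ∀ v : Fin n, v ≠ j → ∃ w, 0 < T v w ∧ ρ w < ρ v := by
    intro v hv
    have hv0 : ρ v ≠ 0 := by
      intro h0
      have := Nat.find_spec (hexists v)
      rw [show Nat.find (hexists v) = ρ v from rfl, h0] at this
      rw [hN, layers] at this
      exact hv (Finset.mem_singleton.mp this)
    obtain ⟨m, hm⟩ : ∃ m, ρ v = m + 1 :=
      ⟨ρ v - 1, (Nat.succ_pred_eq_of_pos (Nat.pos_of_ne_zero hv0)).symm⟩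
    have hvm : v ∈ N (m + 1) := by
      have := Nat.find_spec (hexists v)
      rwa [show Nat.find (hexists v) = ρ v from rfl, hm] at this
    have hmlt : m < ρ v := by rw [hm]; exact Nat.lt_succ_self m
    have hvnot : v ∉ N m := Nat.find_min (hexists v) hmlt
    rw [hN, layers] at hvm
    rcases Finset.mem_union.mp hvm with h | h
    · exact absurd h hvnot
    · obtain ⟨-, w, hw, hT⟩ := Finset.mem_filter.mp h
      refine ⟨w, hT, ?_⟩
      have hle : ρ w ≤ m := Nat.find_le hw
      exact lt_of_le_of_lt hle hmlt
  choose f hf1 hf2 using fun v (h : v ∈ Finset.univ.erase j) =>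
    hpar v (Finset.mem_erase.mp h).1
  let g : Fin n → Fin n := fun v => if h : v ∈ Finset.univ.erase j then f v h else j
  set A : Finset (Fin n × Fin n) :=
      (Finset.univ.erase j).image (fun v => (v, g v)) with hA
  have hgmem : ∀ v (h : v ∈ Finset.univ.erase j), g v = f v h := by
    intro v h
    simp only [g, dif_pos h]
  have harc : ∀ a ∈ A, a.1 ∈ Finset.univ.erase j ∧ 0 < T a.1 a.2 ∧ ρ a.2 < ρ a.1 := by
    intro a ha
    obtain ⟨v, hv, rfl⟩ := Finset.mem_image.mp ha
    refine ⟨hv, ?_, ?_⟩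
    · rw [hgmem v hv]; exact hf1 v hv
    · rw [hgmem v hv]; exact hf2 v hv
  have hforest : IsInForest A := by
    refine ⟨?_, ?_, ?_⟩
    · intro a ha
      have := (harc a ha).2.2
      intro h
      rw [h] at this
      omega
    · intro v
      have hsub : A.filter (fun a => a.1 = v) ⊆ {(v, g v)} := by
        intro a ha
        obtain ⟨ha1, ha2⟩ := Finset.mem_filter.mp ha
        obtain ⟨w, hw, rfl⟩ := Finset.mem_image.mp ha1
        have hwv : w = v := ha2
        subst hwv
        exact Finset.mem_singleton_self _
      calc _ ≤ ({(v, g v)} : Finset (Fin n × Fin n)).card := Finset.card_le_card hsub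
        _ = 1 := Finset.card_singleton _
    · intro v hv
      have hdec : ∀ x y, Relation.TransGen (arcStep A) x y → ρ y < ρ x := by
        intro x y h
        induction h with
        | single h => exact (harc _ h).2.2
        | tail _ h ih => exact lt_trans (harc _ h).2.2 ih
      exact absurd (hdec v v hv) (lt_irrefl _)
  have hroot : IsRootOf A j := by
    intro a ha
    have := (harc a ha).1
    exact fun h => (Finset.mem_erase.mp this).1 h
  have hcard : A.card = n - 1 := by
    rw [hA, Finset.card_image_of_injOn (fun a _ b _ h => congrArg Prod.fst h)]
    rw [Finset.card_erase_of_mem (Finset.mem_univ j), Finset.card_univ, Fintype.card_fin]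
  have hwpos : 0 < digraphWeight T A := by
    rw [digraphWeight]
    exact Finset.prod_pos fun a ha => (harc a ha).2.1
  rw [treeW, qF, forestWeight]
  refine Finset.sum_pos' (fun B _ => ?_) ⟨A, Finset.mem_univ A, by
    rw [if_pos (⟨hforest, hcard, hroot, Relation.ReflTransGen.refl⟩ :
      IsInForest A ∧ (A.card = n - 1 ∧ InTreeOf A j j))]
    exact hwpos⟩
  by_cases h : IsInForest B ∧ (B.card = n - 1 ∧ InTreeOf B j j)
  · rw [if_pos h]
    exact Finset.prod_nonneg fun a _ => hst.1 a.1 a.2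
  · rw [if_neg h]

lemma mfpt_unique_aux (hn : 1 ≤ n) {T : Matrix (Fin n) (Fin n) ℝ} (hst : IsStochastic T)
    (hirr : IsIrreducibleMC T) (j : Fin n) (e : Fin n → ℝ)
    (he : ∀ i, e i = ∑ k ∈ Finset.univ.filter (fun k => k ≠ j), T i k * e k) :
    ∀ i, e i ≤ 0 := by
  by_contra hcon
  push_neg at hcon
  obtain ⟨i1, hi1⟩ := hcon
  obtain ⟨i0, -, hmax⟩ := Finset.exists_max_image Finset.univ e ⟨i1, Finset.mem_univ _⟩
  set c := e i0 with hc0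
  have hc : 0 < c := lt_of_lt_of_le hi1 (hmax i1 (Finset.mem_univ _))
  have hfilter : Finset.univ.filter (fun k : Fin n => ¬ k ≠ j) = {j} := by
    ext k
    simp [not_not]
  have hrowsplit : ∀ i : Fin n, ∑ k ∈ Finset.univ.filter (fun k => k ≠ j), T i k = 1 - T i j := by
    intro i
    have h := Finset.sum_filter_add_sum_filter_not Finset.univ (fun k : Fin n => k ≠ j) (T i)
    rw [hfilter, Finset.sum_singleton, hst.2 i] at h
    linarith
  have key : ∀ i, e i = c → (T i j = 0 ∧ ∀ k, 0 < T i k → e k = c) := by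
    intro i hi
    have h1 : ∑ k ∈ Finset.univ.filter (fun k : Fin n => k ≠ j), T i k * e k ≤
        ∑ k ∈ Finset.univ.filter (fun k : Fin n => k ≠ j), T i k * c := by
      refine Finset.sum_le_sum fun k _ => ?_
      exact mul_le_mul_of_nonneg_left (hmax k (Finset.mem_univ _)) (hst.1 i k)
    have h2 : ∑ k ∈ Finset.univ.filter (fun k : Fin n => k ≠ j), T i k * c = (1 - T i j) * c := by
      rw [← Finset.sum_mul, hrowsplit i]
    have h3 : c ≤ (1 - T i j) * c := by
      calc c = e i := hi.symm
        _ = _ := he i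
        _ ≤ _ := h1
        _ = _ := h2
    have hTij : T i j = 0 := by
      have h4 : T i j * c ≤ 0 := by nlinarith
      have h5 := hst.1 i j
      nlinarith
    have h6 : ∑ k ∈ Finset.univ.filter (fun k : Fin n => k ≠ j), T i k * (c - e k) = 0 := by
      have h7 : ∑ k ∈ Finset.univ.filter (fun k : Fin n => k ≠ j), T i k * (c - e k)
          = ∑ k ∈ Finset.univ.filter (fun k : Fin n => k ≠ j), T i k * c
            - ∑ k ∈ Finset.univ.filter (fun k : Fin n => k ≠ j), T i k * e k := by
        rw [← Finset.sum_sub_distrib]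
        exact Finset.sum_congr rfl fun k _ => by ring
      have h8 : ∑ k ∈ Finset.univ.filter (fun k : Fin n => k ≠ j), T i k * e k = c := by
        rw [← he i, ← hi]
      rw [h7, h8, h2, hTij]
      ring
    have h9 : ∀ k ∈ Finset.univ.filter (fun k : Fin n => k ≠ j), T i k * (c - e k) = 0 := by
      rw [← Finset.sum_eq_zero_iff_of_nonneg]
      · exact h6
      · intro k _
        have := hmax k (Finset.mem_univ _)
        have := hst.1 i k
        nlinarith
    refine ⟨hTij, fun k hTk => ?_⟩
    by_cases hkj : k = j
    · rw [hkj] at hTk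
      rw [hTij] at hTk
      exact absurd hTk (lt_irrefl 0)
    · have := h9 k (Finset.mem_filter.2 ⟨Finset.mem_univ _, hkj⟩)
      rcases mul_eq_zero.mp this with h | h
      · exact absurd h (ne_of_gt hTk)
      · linarith
  have hreach : ∀ w, Relation.ReflTransGen (fun a b => 0 < T a b) i0 w → e w = c := by
    intro w h
    induction h with
    | refl => rfl
    | tail _ hbc ih => exact (key _ ih).2 _ hbc
  obtain ⟨b, hb, hbj⟩ := Relation.TransGen.tail'_iff.mp (hirr i0 j)
  have hb0 := (key b (hreach b hb)).1
  rw [hb0] at hbj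
  exact absurd hbj (lt_irrefl 0)
end Aux6

section Aux7
variable {n : ℕ}

/-- The candidate mean-first-passage-time matrix built from forest weights. -/
noncomputable def mfptCand (T : Matrix (Fin n) (Fin n) ℝ) : Matrix (Fin n) (Fin n) ℝ :=
  Matrix.of fun i j => if i = j then (∑ k, treeW T k) / treeW T j else fF T i j / treeW T j

lemma mfptCand_diag (T : Matrix (Fin n) (Fin n) ℝ) (j : Fin n) :
    mfptCand T j j = (∑ k, treeW T k) / treeW T j := if_pos rfl

lemma mfptCand_off (T : Matrix (Fin n) (Fin n) ℝ) {i j : Fin n} (hij : i ≠ j) :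
    mfptCand T i j = fF T i j / treeW T j := if_neg hij

lemma mfptCand_eq (hn : 2 ≤ n) (T : Matrix (Fin n) (Fin n) ℝ) (hst : IsStochastic T)
    (hirr : IsIrreducibleMC T) (i j : Fin n) :
    mfptCand T i j = 1 + ∑ k ∈ Finset.univ.filter (fun k => k ≠ j),
      T i k * mfptCand T k j := by
  have hqj : 0 < treeW T j := treeW_pos (by omega) hst hirr j
  have hqj' : treeW T j ≠ 0 := ne_of_gt hqj
  have hsum : ∑ k ∈ Finset.univ.filter (fun k => k ≠ j), T i k * mfptCand T k j
      = (∑ k ∈ Finset.univ.filter (fun k => k ≠ j), T i k * fF T k j) / treeW T j := by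
    rw [Finset.sum_div]
    refine Finset.sum_congr rfl fun k hk => ?_
    rw [mfptCand_off T (Finset.mem_filter.mp hk).2, mul_div_assoc]
  by_cases hij : i = j
  · subst hij
    rw [mfptCand_diag, hsum, keyB hn T i, add_div, div_self hqj']
  · rw [mfptCand_off T hij, hsum, keyA hn T hst hij, add_div, div_self hqj']
end Aux7


/-- forest expression for hitting times: `m_ij = f_ij / q_j` for `i ≠ j`
and `m_jj = q / q_j`. -/
theorem stmt2 {n : ℕ} (hn : 2 ≤ n) (T : Matrix (Fin n) (Fin n) ℝ)
    (hst : IsStochastic T) (hirr : IsIrreducibleMC T)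
    (M : Matrix (Fin n) (Fin n) ℝ) (hM : IsMFPTMatrix T M) :
    (∀ i j, i ≠ j → M i j = fF T i j / treeW T j) ∧
      ∀ j, M j j = (∑ k, treeW T k) / treeW T j := by
  have hNeq := mfptCand_eq hn T hst hirr
  have hdiff : ∀ j i, M i j - mfptCand T i j = ∑ k ∈ Finset.univ.filter (fun k => k ≠ j),
      T i k * (M k j - mfptCand T k j) := by
    intro j i
    have h1 := hM i j
    have h2 := hNeq i j
    have h3 : ∑ k ∈ Finset.univ.filter (fun k => k ≠ j),
        T i k * (M k j - mfptCand T k j)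
        = ∑ k ∈ Finset.univ.filter (fun k => k ≠ j), T i k * M k j
          - ∑ k ∈ Finset.univ.filter (fun k => k ≠ j), T i k * mfptCand T k j := by
      rw [← Finset.sum_sub_distrib]
      exact Finset.sum_congr rfl fun k _ => by ring
    rw [h3]
    linarith
  have hdiff' : ∀ j i, mfptCand T i j - M i j = ∑ k ∈ Finset.univ.filter (fun k => k ≠ j),
      T i k * (mfptCand T k j - M k j) := by
    intro j i
    have h1 := hdiff j i
    have h3 : ∑ k ∈ Finset.univ.filter (fun k => k ≠ j),
        T i k * (mfptCand T k j - M k j)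
        = - ∑ k ∈ Finset.univ.filter (fun k => k ≠ j), T i k * (M k j - mfptCand T k j) := by
      rw [← Finset.sum_neg_distrib]
      exact Finset.sum_congr rfl fun k _ => by ring
    rw [h3]
    linarith
  have hzero : ∀ j i, M i j = mfptCand T i j := by
    intro j i
    have hle := mfpt_unique_aux (by omega) hst hirr j (fun i' => M i' j - mfptCand T i' j)
      (fun i' => hdiff j i') i
    have hge := mfpt_unique_aux (by omega) hst hirr j (fun i' => mfptCand T i' j - M i' j)
      (fun i' => hdiff' j i') i
    linarith
  constructor
  · intro i j hij
    rw [hzero j i, mfptCand_off T hij]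
  · intro j
    rw [hzero j j, mfptCand_diag]
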